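/- If each formula in a nonempty finite list of formulas is a literal (a letter or a negated letter) and the list contains both some letter L and its negation ¬L, then the disjunction of the list is provable in the system with axiom A ∨ ¬A ∨ B̄ and the permutation rule. -/
import Mathlib


/-- Propositional formulas built from letters by negation and disjunction. -/
inductive Fm where
  | letter : ℕ → Fm
  | neg : Fm → Fm
  | or : Fm → Fm → Fm
deriving DecidableEq

/-- Boolean evaluation under a valuation of the letters. -/
def Fm.eval (v : ℕ → Bool) : Fm → Bool
  | .letter n => v n
  | .neg a => !(a.eval v)
  | .or a b => a.eval v || b.eval v

/-- A formula is a tautology if it is true under every valuation. -/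
def Taut (A : Fm) : Prop := ∀ v : ℕ → Bool, A.eval v = true

/-- Right-associated disjunction `A ∨ B₁ ∨ ⋯ ∨ Bₙ` (the list possibly empty). -/
def disj : Fm → List Fm → Fm
  | A, [] => A
  | A, B :: l => .or A (disj B l)

/-- Provability: axiom scheme `A ∨ ¬A ∨ B̄`, rules: permutation of disjuncts,
associativity, double negation introduction, De Morgan. -/
inductive Prov : Fm → Prop where
  | ax (A : Fm) (l : List Fm) : Prov (disj A (.neg A :: l))
  | perm (A B : Fm) (l l' : List Fm) : (A :: l).Perm (B :: l') →
      Prov (disj A l) → Prov (disj B l')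
  | assoc (A B : Fm) (l : List Fm) :
      Prov (disj A (B :: l)) → Prov (disj (.or A B) l)
  | dneg (A : Fm) (l : List Fm) :
      Prov (disj A l) → Prov (disj (.neg (.neg A)) l)
  | demorgan (A B : Fm) (l : List Fm) :
      Prov (disj (.neg A) l) → Prov (disj (.neg B) l) →
      Prov (disj (.neg (.or A B)) l)

/-- The subsystem with only the axiom scheme and the permutation rule. -/
inductive ProvP : Fm → Prop where
  | ax (A : Fm) (l : List Fm) : ProvP (disj A (.neg A :: l))
  | perm (A B : Fm) (l l' : List Fm) : (A :: l).Perm (B :: l') →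
      ProvP (disj A l) → ProvP (disj B l')

/-- A literal is a letter or a negated letter. -/
def IsLit (A : Fm) : Prop := ∃ n, A = Fm.letter n ∨ A = Fm.neg (Fm.letter n)

theorem literals_provable (A : Fm) (l : List Fm) (hlit : ∀ B ∈ A :: l, IsLit B)
    (L : ℕ) (h1 : Fm.letter L ∈ A :: l) (h2 : Fm.neg (Fm.letter L) ∈ A :: l) :
    ProvP (disj A l) := by
  have hp1 : (A :: l).Perm (Fm.letter L :: (A :: l).erase (Fm.letter L)) :=
    List.perm_cons_erase h1
  have h2' : Fm.neg (Fm.letter L) ∈ (A :: l).erase (Fm.letter L) := by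
    have := hp1.mem_iff.mp h2
    simpa using this
  have hp2 : ((A :: l).erase (Fm.letter L)).Perm
      (Fm.neg (Fm.letter L) :: ((A :: l).erase (Fm.letter L)).erase (Fm.neg (Fm.letter L))) :=
    List.perm_cons_erase h2'
  set rest := ((A :: l).erase (Fm.letter L)).erase (Fm.neg (Fm.letter L))
  have hperm : (Fm.letter L :: Fm.neg (Fm.letter L) :: rest).Perm (A :: l) :=
    ((hp1.trans (hp2.cons _)).symm)
  exact ProvP.perm (Fm.letter L) A (Fm.neg (Fm.letter L) :: rest) l hperm
    (ProvP.ax (Fm.letter L) rest)
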